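/- Let λ > 0 and let x_f be a nonzero real fixed point of ζ_λ (so x_f ≠ 0, x_f ≠ −1, and ζ_λ(x_f) = x_f). Then x_f > −1 and the multiplier of the fixed point satisfies |ζ_λ'(x_f)| = |x_f² + x_f − 1|/(x_f + 1). -/

import Mathlib

/-- The real function `ζ_λ(x) = λ·x·e^{−x}/(x+1)`. -/
noncomputable def zeta (lam x : ℝ) : ℝ := lam * x * Real.exp (-x) / (x + 1)

theorem multiplier_at_nonzero_fixed_point (lam : ℝ) (hlam : 0 < lam) (xf : ℝ)
    (hxf0 : xf ≠ 0) (hxf1 : xf ≠ -1) (hfix : zeta lam xf = xf) :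
    -1 < xf ∧ |deriv (zeta lam) xf| = |xf ^ 2 + xf - 1| / (xf + 1) := by
  have hden : xf + 1 ≠ 0 := fun h => hxf1 (by linarith)
  have hkey : lam * Real.exp (-xf) = xf + 1 := by
    unfold zeta at hfix
    field_simp at hfix
    have h2 : xf * (lam * Real.exp (-xf)) = xf * (xf + 1) := by linear_combination xf * hfix
    exact mul_left_cancel₀ hxf0 h2
  have hpos : (0:ℝ) < xf + 1 := by
    rw [← hkey]; positivity
  have hx1 : -1 < xf := by linarith
  refine ⟨hx1, ?_⟩
  have hexp : HasDerivAt (fun x : ℝ => Real.exp (-x)) (-Real.exp (-xf)) xf := by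
    have := (Real.hasDerivAt_exp (-xf)).comp xf (hasDerivAt_neg xf)
    simpa [Function.comp_def] using this
  have hnum : HasDerivAt (fun x : ℝ => lam * x * Real.exp (-x))
      (lam * Real.exp (-xf) + lam * xf * (-Real.exp (-xf))) xf := by
    have := ((hasDerivAt_id xf).const_mul lam).mul hexp
    simpa [Pi.mul_def, mul_comm, mul_assoc, mul_left_comm] using this
  have hdenD : HasDerivAt (fun x : ℝ => x + 1) 1 xf := by
    simpa using (hasDerivAt_id xf).add_const 1
  have hd : HasDerivAt (zeta lam)
      (((lam * Real.exp (-xf) + lam * xf * (-Real.exp (-xf))) * (xf + 1) -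
        lam * xf * Real.exp (-xf) * 1) / (xf + 1) ^ 2) xf := hnum.div hdenD hden
  have hderiv : deriv (zeta lam) xf = (1 - xf - xf ^ 2) / (xf + 1) := by
    rw [hd.deriv]
    field_simp
    linear_combination (1 - xf - xf ^ 2) * hkey
  rw [hderiv, abs_div, abs_of_pos hpos]
  congr 1
  rw [← abs_neg]
  ring_nf
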